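/- arXiv:1510.08722 — 2 statements merged into one kernel-verified Lean document; each statement's English description precedes it below -/
import Mathlib

section
/- In a solid, if e(z) ≤ e(y), then x·(y + e(z)) = x·y + x·e(z). -/
structure Assembly (A : Type*) where
  add : A → A → A
  e : A → A
  neg : A → A
  add_assoc : ∀ x y z, add x (add y z) = add (add x y) z
  add_comm : ∀ x y, add x y = add y x
  add_e : ∀ x, add x (e x) = x
  e_max : ∀ x f, add x f = x → add (e x) f = e x
  add_neg : ∀ x, add x (neg x) = e x
  e_neg : ∀ x, e (neg x) = e x
  e_add : ∀ x y, e (add x y) = e x ∨ e (add x y) = e y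

structure OrderedAssembly (A : Type*) extends Assembly A where
  le : A → A → Prop
  le_refl : ∀ x, le x x
  le_antisymm : ∀ x y, le x y → le y x → x = y
  le_trans : ∀ x y z, le x y → le y z → le x z
  le_total : ∀ x y, le x y ∨ le y x
  add_le_add : ∀ x y z, le x y → le (add x z) (add y z)
  le_e : ∀ x y, add y (e x) = e x → le y (e x) ∧ le (neg y) (e x)

structure Solid (A : Type*) extends OrderedAssembly A where
  mul : A → A → A
  u : A → A
  inv : A → A
  mul_assoc : ∀ x y z, mul x (mul y z) = mul (mul x y) z
  mul_comm : ∀ x y, mul x y = mul y x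
  mul_u : ∀ x, x ≠ e x → mul x (u x) = x
  u_max : ∀ x, x ≠ e x → ∀ v, mul x v = x → mul (u x) v = u x
  mul_inv : ∀ x, x ≠ e x → mul x (inv x) = u x
  u_inv : ∀ x, x ≠ e x → u (inv x) = u x
  u_mul : ∀ x y, x ≠ e x → y ≠ e y →
    u (mul x y) = u x ∨ u (mul x y) = u y
  compat_mul : ∀ x y z, le (e x) x → e x ≠ x → le y z → le (mul x y) (mul x z)
  amplification : ∀ x y z, le (e y) y → le y z → le (mul (e x) y) (mul (e x) z)
  escala : ∀ x y, ∃ z, mul (e x) y = e z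
  e_mul : ∀ x y, e (mul x y) = add (mul (e x) y) (mul (e y) x)
  e_u : ∀ x, x ≠ e x → e (u x) = mul (e x) (inv x)
  dist : ∀ x y z, add (mul x y) (mul x z) =
    add (add (mul x (add y z)) (mul (e x) y)) (mul (e x) z)
  neg_mul : ∀ x y, neg (mul x y) = mul (neg x) y
  zero : A
  add_zero : ∀ x, add x zero = x
  one : A
  one_mul : ∀ x, mul one x = x
  M : A
  e_add_M : ∀ x, add (e x) M = M
  exists_neutrix : ∃ x, e x ≠ zero ∧ e x ≠ M
  decomp : ∀ x, ∃ a, x = add a (e x) ∧ e a = zero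
  dense : ∀ x y, x = e x → y = e y → le x y → x ≠ y →
    ∃ z, z ≠ e z ∧ le x z ∧ x ≠ z ∧ le z y ∧ z ≠ y

/-- e x + e x = e x -/
lemma Solid.idem {A : Type*} (S : Solid A) (x : A) :
    S.add (S.e x) (S.e x) = S.e x :=
  S.e_max x (S.e x) (S.add_e x)

/-- e (e x) = e x -/
lemma Solid.e_idem {A : Type*} (S : Solid A) (x : A) :
    S.e (S.e x) = S.e x := by
  have h1 : S.add (S.e (S.e x)) (S.e x) = S.e (S.e x) :=
    S.e_max (S.e x) (S.e x) (S.idem x)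
  have h2 : S.add (S.e x) (S.e (S.e x)) = S.e x := S.add_e (S.e x)
  rw [S.add_comm] at h1
  rw [h2] at h1
  exact h1.symm

/-- zero ≤ e a -/
lemma Solid.zero_le_e {A : Type*} (S : Solid A) (a : A) :
    S.le S.zero (S.e a) := by
  have : S.add S.zero (S.e a) = S.e a := by
    rw [S.add_comm, S.add_zero]
  exact (S.le_e a S.zero this).1

/-- if e a ≤ e b then e b + e a = e b -/
lemma Solid.abs {A : Type*} (S : Solid A) (a b : A)
    (h : S.le (S.e a) (S.e b)) : S.add (S.e b) (S.e a) = S.e b := by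
  apply S.le_antisymm
  · have h1 : S.le (S.add (S.e a) (S.e b)) (S.add (S.e b) (S.e b)) :=
      S.add_le_add _ _ _ h
    rw [S.idem b] at h1
    rw [S.add_comm]
    exact h1
  · have h2 : S.le (S.add S.zero (S.e b)) (S.add (S.e a) (S.e b)) :=
      S.add_le_add _ _ _ (S.zero_le_e a)
    rw [S.add_comm S.zero, S.add_zero] at h2
    rw [S.add_comm (S.e b)]
    exact h2

/-- x·y absorbs (e x)·y -/
lemma Solid.absorb_exy {A : Type*} (S : Solid A) (x y : A) :
    S.add (S.mul x y) (S.mul (S.e x) y) = S.mul x y := by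
  obtain ⟨t, ht⟩ := S.escala x y
  have hmm : S.add (S.mul (S.e x) y) (S.mul (S.e x) y) = S.mul (S.e x) y := by
    rw [ht]; exact S.idem t
  have hx : S.mul x y =
      S.add (S.mul x y) (S.add (S.mul (S.e x) y) (S.mul (S.e y) x)) := by
    conv_lhs => rw [← S.add_e (S.mul x y)]
    rw [S.e_mul]
  have key : S.add (S.add (S.mul (S.e x) y) (S.mul (S.e y) x)) (S.mul (S.e x) y)
      = S.add (S.mul (S.e x) y) (S.mul (S.e y) x) := by
    rw [← S.add_assoc, S.add_comm (S.mul (S.e y) x), S.add_assoc, hmm]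
  calc S.add (S.mul x y) (S.mul (S.e x) y)
      = S.add (S.add (S.mul x y)
          (S.add (S.mul (S.e x) y) (S.mul (S.e y) x))) (S.mul (S.e x) y) := by
        rw [← hx]
    _ = S.add (S.mul x y)
          (S.add (S.add (S.mul (S.e x) y) (S.mul (S.e y) x))
            (S.mul (S.e x) y)) := by rw [← S.add_assoc]
    _ = S.add (S.mul x y) (S.add (S.mul (S.e x) y) (S.mul (S.e y) x)) := by
        rw [key]
    _ = S.mul x y := hx.symm

theorem stmt15 {A : Type*} (S : Solid A) (x y z : A)
    (h : S.le (S.e z) (S.e y)) :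
    S.mul x (S.add y (S.e z)) = S.add (S.mul x y) (S.mul x (S.e z)) := by
  -- e y + e z = e y, hence y + e z = y
  have hEy : S.add (S.e y) (S.e z) = S.e y := S.abs z y h
  have hyz : S.add y (S.e z) = y := by
    conv_lhs => rw [← S.add_e y]
    rw [← S.add_assoc, hEy, S.add_e]
  rw [hyz]
  -- amplification: (e x)·(e z) ≤ (e x)·(e y)
  have hamp : S.le (S.mul (S.e x) (S.e z)) (S.mul (S.e x) (S.e y)) := by
    apply S.amplification x (S.e z) (S.e y) _ h
    rw [S.e_idem]
    exact S.le_refl _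
  obtain ⟨t1, ht1⟩ := S.escala x (S.e z)
  obtain ⟨t2, ht2⟩ := S.escala x (S.e y)
  -- (e x)·(e y) + (e x)·(e z) = (e x)·(e y)
  have hBB : S.add (S.mul (S.e x) (S.e y)) (S.mul (S.e x) (S.e z)) =
      S.mul (S.e x) (S.e y) := by
    rw [ht1, ht2]
    apply S.abs
    rw [← ht1, ← ht2]
    exact hamp
  -- (e x)·y + (e x)·(e y) = (e x)·y
  have hC : S.add (S.mul (S.e x) y) (S.mul (S.e x) (S.e y)) =
      S.mul (S.e x) y := by
    obtain ⟨s, hs⟩ := S.escala x y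
    have h1 : S.e (S.mul (S.e x) y) = S.mul (S.e x) y := by
      rw [hs, S.e_idem]
    rw [S.e_mul, S.e_idem] at h1
    rw [S.mul_comm (S.e x) (S.e y)]
    exact h1
  -- (e x)·y + (e x)·(e z) = (e x)·y
  have hD : S.add (S.mul (S.e x) y) (S.mul (S.e x) (S.e z)) =
      S.mul (S.e x) y := by
    calc S.add (S.mul (S.e x) y) (S.mul (S.e x) (S.e z))
        = S.add (S.add (S.mul (S.e x) y) (S.mul (S.e x) (S.e y)))
            (S.mul (S.e x) (S.e z)) := by rw [hC]
      _ = S.add (S.mul (S.e x) y)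
            (S.add (S.mul (S.e x) (S.e y)) (S.mul (S.e x) (S.e z))) := by
          rw [← S.add_assoc]
      _ = S.add (S.mul (S.e x) y) (S.mul (S.e x) (S.e y)) := by rw [hBB]
      _ = S.mul (S.e x) y := hC
  -- x·y + (e x)·(e z) = x·y
  have hE : S.add (S.mul x y) (S.mul (S.e x) (S.e z)) = S.mul x y := by
    calc S.add (S.mul x y) (S.mul (S.e x) (S.e z))
        = S.add (S.add (S.mul x y) (S.mul (S.e x) y))
            (S.mul (S.e x) (S.e z)) := by rw [S.absorb_exy]
      _ = S.add (S.mul x y)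
            (S.add (S.mul (S.e x) y) (S.mul (S.e x) (S.e z))) := by
          rw [← S.add_assoc]
      _ = S.add (S.mul x y) (S.mul (S.e x) y) := by rw [hD]
      _ = S.mul x y := S.absorb_exy x y
  -- finish via dist
  have hdist := S.dist x y (S.e z)
  rw [hyz, S.absorb_exy, hE] at hdist
  exact hdist.symm
end

section
/- In a solid, distributivity x·y + x·z = x·(y+z) holds if and only if either e(x)·(y+z) = e(x)·y + e(x)·z or R(x) ≤ R(y) + R(z), where R(w) denotes the relative uncertainty of w, defined as R(w) = e(u(w)) when w is zeroless (w ≠ e(w)) and R(w) = M (the maximal magnitude) when w = e(w). -/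
open Classical in
/-- The relative uncertainty: `R w = e (u w)` for zeroless `w`, and the
maximal magnitude `M` when `w` is a magnitude. -/
noncomputable def Solid.R {A : Type*} (S : Solid A) (w : A) : A :=
  if w = S.e w then S.M else S.e (S.u w)

namespace SolidAux

variable {A : Type*} (S : Solid A)

/-- magnitudes -/
def IsMag (m : A) : Prop := S.e m = m

variable {S}

section Tier0

lemma mag_e (x : A) : IsMag S (S.e x) := by
  -- e (e x) = e x
  have h1 : S.add (S.e x) (S.e x) = S.e x := S.e_max x (S.e x) (S.add_e x)
  have h2 : S.add (S.e (S.e x)) (S.e x) = S.e (S.e x) := S.e_max (S.e x) (S.e x) h1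
  have h3 : S.add (S.e x) (S.e (S.e x)) = S.e x := S.add_e (S.e x)
  show S.e (S.e x) = S.e x
  calc S.e (S.e x) = S.add (S.e (S.e x)) (S.e x) := h2.symm
    _ = S.add (S.e x) (S.e (S.e x)) := S.add_comm _ _
    _ = S.e x := h3

lemma e_e (x : A) : S.e (S.e x) = S.e x := mag_e x

lemma mag_idem {m : A} (hm : IsMag S m) : S.add m m = m := by
  have h := S.add_e m
  rwa [hm] at h

lemma idem_mag {m : A} (h : S.add m m = m) : IsMag S m := by
  have h1 : S.add (S.e m) m = S.e m := S.e_max m m h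
  have h2 : S.add m (S.e m) = m := S.add_e m
  show S.e m = m
  calc S.e m = S.add (S.e m) m := h1.symm
    _ = S.add m (S.e m) := S.add_comm _ _
    _ = m := h2

lemma e_zero : S.e S.zero = S.zero := by
  have h1 : S.add S.zero (S.e S.zero) = S.zero := S.add_e S.zero
  have h2 : S.add (S.e S.zero) S.zero = S.e S.zero := S.add_zero _
  calc S.e S.zero = S.add (S.e S.zero) S.zero := h2.symm
    _ = S.add S.zero (S.e S.zero) := S.add_comm _ _
    _ = S.zero := h1

lemma mag_zero : IsMag S S.zero := e_zero

lemma zero_add (x : A) : S.add S.zero x = x := by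
  rw [S.add_comm]; exact S.add_zero x

lemma zero_le_mag {m : A} (hm : IsMag S m) : S.le S.zero m := by
  have h : S.add S.zero (S.e m) = S.e m := by rw [hm]; exact zero_add m
  have := (S.le_e m S.zero h).1
  rwa [hm] at this

/-- absorption: x + p = x → p ≤ e x -/
lemma absorb_le {x p : A} (h : S.add x p = x) : S.le p (S.e x) := by
  have h1 : S.add (S.e x) p = S.e x := S.e_max x p h
  have h2 : S.add p (S.e x) = S.e x := by rw [S.add_comm]; exact h1
  exact (S.le_e x p h2).1

lemma mag_absorb {p q : A} (hp : IsMag S p) (hq : IsMag S q) (h : S.le p q) :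
    S.add p q = q := by
  apply S.le_antisymm
  · have h1 : S.le (S.add p q) (S.add q q) := S.add_le_add p q q h
    rwa [mag_idem hq] at h1
  · have h1 : S.le (S.add S.zero q) (S.add p q) := S.add_le_add _ _ q (zero_le_mag hp)
    rwa [zero_add] at h1

lemma le_absorb {x p : A} (hp : IsMag S p) (h : S.le p (S.e x)) : S.add x p = x := by
  have h1 : S.add p (S.e x) = S.e x := mag_absorb hp (mag_e x) h
  calc S.add x p = S.add (S.add x (S.e x)) p := by rw [S.add_e]
    _ = S.add x (S.add (S.e x) p) := (S.add_assoc _ _ _).symm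
    _ = S.add x (S.add p (S.e x)) := by rw [S.add_comm (S.e x) p]
    _ = S.add x (S.e x) := by rw [h1]
    _ = x := S.add_e x

lemma mag_add {p q : A} (hp : IsMag S p) (hq : IsMag S q) : IsMag S (S.add p q) := by
  apply idem_mag
  calc S.add (S.add p q) (S.add p q) = S.add (S.add (S.add p q) p) q := S.add_assoc _ _ _
    _ = S.add (S.add p (S.add p q)) q := by rw [S.add_comm (S.add p q) p]
    _ = S.add (S.add (S.add p p) q) q := by rw [S.add_assoc]
    _ = S.add (S.add p p) (S.add q q) := (S.add_assoc _ _ _).symm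
    _ = S.add p q := by rw [mag_idem hp, mag_idem hq]

lemma mag_add_eq_or {p q : A} (hp : IsMag S p) (hq : IsMag S q) :
    S.add p q = p ∨ S.add p q = q := by
  have h := S.e_add p q
  have hm : S.e (S.add p q) = S.add p q := mag_add hp hq
  rw [hm, hp, hq] at h
  exact h

lemma le_add_left {p q : A} (hp : IsMag S p) (hq : IsMag S q) : S.le p (S.add p q) := by
  have h : S.add (S.add p q) p = S.add p q := by
    calc S.add (S.add p q) p = S.add p (S.add q p) := (S.add_assoc p q p).symm
      _ = S.add p (S.add p q) := by rw [S.add_comm q p]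
      _ = S.add (S.add p p) q := S.add_assoc _ _ _
      _ = S.add p q := by rw [mag_idem hp]
  have := absorb_le h
  rwa [show S.e (S.add p q) = S.add p q from mag_add hp hq] at this

lemma le_add_right {p q : A} (hp : IsMag S p) (hq : IsMag S q) : S.le q (S.add p q) := by
  rw [S.add_comm]; exact le_add_left hq hp

lemma mag_le_iff_absorb {p q : A} (hp : IsMag S p) (hq : IsMag S q) :
    S.le p q ↔ S.add p q = q := by
  constructor
  · exact mag_absorb hp hq
  · intro h
    have := le_add_left hp hq
    rwa [h] at this

lemma mag_add_le {p q r : A} (hp : IsMag S p) (hq : IsMag S q)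
    (h1 : S.le p r) (h2 : S.le q r) : S.le (S.add p q) r := by
  rcases mag_add_eq_or hp hq with h | h <;> rw [h] <;> assumption

lemma e_add_eq (x y : A) : S.e (S.add x y) = S.add (S.e x) (S.e y) := by
  have hx : S.le (S.e x) (S.e (S.add x y)) := by
    apply absorb_le
    calc S.add (S.add x y) (S.e x) = S.add (S.add y x) (S.e x) := by rw [S.add_comm x y]
      _ = S.add y (S.add x (S.e x)) := (S.add_assoc _ _ _).symm
      _ = S.add y x := by rw [S.add_e]
      _ = S.add x y := S.add_comm _ _
  have hy : S.le (S.e y) (S.e (S.add x y)) := by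
    apply absorb_le
    calc S.add (S.add x y) (S.e y) = S.add x (S.add y (S.e y)) := (S.add_assoc _ _ _).symm
      _ = S.add x y := by rw [S.add_e]
  rcases S.e_add x y with h | h
  · rw [h] at hy ⊢
    rw [S.add_comm]
    exact (mag_absorb (mag_e y) (mag_e x) hy).symm
  · rw [h] at hx ⊢
    exact (mag_absorb (mag_e x) (mag_e y) hx).symm

end Tier0

end SolidAux
namespace SolidAux

variable {A : Type*} {S : Solid A}

section Neg

lemma neg_unique {s w : A} (h1 : S.add s w = S.e w) (h2 : S.e s = S.e w) :
    s = S.neg w := by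
  have hnw : S.add (S.neg w) (S.e (S.neg w)) = S.neg w := S.add_e _
  rw [S.e_neg] at hnw
  calc s = S.add s (S.e s) := (S.add_e s).symm
    _ = S.add s (S.e w) := by rw [h2]
    _ = S.add s (S.add w (S.neg w)) := by rw [S.add_neg]
    _ = S.add (S.add s w) (S.neg w) := S.add_assoc _ _ _
    _ = S.add (S.e w) (S.neg w) := by rw [h1]
    _ = S.add (S.neg w) (S.e w) := S.add_comm _ _
    _ = S.neg w := hnw

lemma neg_mag {m : A} (hm : IsMag S m) : S.neg m = m := by
  have h1 : S.add (S.neg m) (S.e (S.neg m)) = S.neg m := S.add_e _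
  rw [S.e_neg, hm] at h1
  have h2 : S.add m (S.neg m) = m := by
    have := S.add_neg m; rwa [hm] at this
  calc S.neg m = S.add (S.neg m) m := h1.symm
    _ = S.add m (S.neg m) := S.add_comm _ _
    _ = m := h2

lemma neg_neg (x : A) : S.neg (S.neg x) = x := by
  symm
  apply neg_unique
  · rw [S.e_neg]; exact S.add_neg x
  · rw [S.e_neg]

lemma neg_add (a b : A) : S.neg (S.add a b) = S.add (S.neg a) (S.neg b) := by
  symm
  apply neg_unique
  · calc S.add (S.add (S.neg a) (S.neg b)) (S.add a b)
        = S.add (S.neg a) (S.add (S.neg b) (S.add a b)) := (S.add_assoc _ _ _).symm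
      _ = S.add (S.neg a) (S.add (S.add a b) (S.neg b)) := by rw [S.add_comm (S.neg b)]
      _ = S.add (S.neg a) (S.add a (S.add b (S.neg b))) := by rw [S.add_assoc a b (S.neg b)]
      _ = S.add (S.neg a) (S.add a (S.e b)) := by rw [S.add_neg]
      _ = S.add (S.add (S.neg a) a) (S.e b) := S.add_assoc _ _ _
      _ = S.add (S.add a (S.neg a)) (S.e b) := by rw [S.add_comm (S.neg a) a]
      _ = S.add (S.e a) (S.e b) := by rw [S.add_neg]
      _ = S.e (S.add a b) := (e_add_eq a b).symm
  · rw [e_add_eq, S.e_neg, S.e_neg, e_add_eq]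

lemma neg_zero : S.neg S.zero = S.zero := neg_mag mag_zero

lemma add_le_add_left {y z : A} (x : A) (h : S.le y z) :
    S.le (S.add x y) (S.add x z) := by
  have := S.add_le_add y z x h
  rwa [S.add_comm y x, S.add_comm z x] at this

lemma le_add_mag {x : A} {p : A} (hp : IsMag S p) : S.le x (S.add x p) := by
  have h := S.add_le_add S.zero p x (zero_le_mag hp)
  rwa [zero_add, S.add_comm p x] at h

lemma cancel_le {a b c : A} (h : S.le (S.add a c) (S.add b c)) :
    S.le a (S.add b (S.e c)) := by
  have h1 := S.add_le_add _ _ (S.neg c) h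
  have e1 : S.add (S.add a c) (S.neg c) = S.add a (S.e c) := by
    rw [← S.add_assoc, S.add_neg]
  have e2 : S.add (S.add b c) (S.neg c) = S.add b (S.e c) := by
    rw [← S.add_assoc, S.add_neg]
  rw [e1, e2] at h1
  exact S.le_trans _ _ _ (le_add_mag (mag_e c)) h1

lemma antitone_neg {a b : A} (h : S.le a b) :
    S.le (S.neg b) (S.add (S.neg a) (S.e b)) := by
  have h1 := S.add_le_add a b (S.add (S.neg a) (S.neg b)) h
  have e1 : S.add a (S.add (S.neg a) (S.neg b)) = S.add (S.e a) (S.neg b) := by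
    rw [S.add_assoc, S.add_neg]
  have e2 : S.add b (S.add (S.neg a) (S.neg b)) = S.add (S.neg a) (S.e b) := by
    calc S.add b (S.add (S.neg a) (S.neg b)) = S.add b (S.add (S.neg b) (S.neg a)) := by
          rw [S.add_comm (S.neg a)]
      _ = S.add (S.add b (S.neg b)) (S.neg a) := S.add_assoc _ _ _
      _ = S.add (S.e b) (S.neg a) := by rw [S.add_neg]
      _ = S.add (S.neg a) (S.e b) := S.add_comm _ _
  rw [e1, e2] at h1
  refine S.le_trans _ _ _ ?_ h1
  have := le_add_mag (p := S.e a) (x := S.neg b) (mag_e a)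
  rwa [S.add_comm] at this

lemma pos_e_le {s : A} (h : S.le S.zero s) : S.le (S.e s) s := by
  have h1 := S.add_le_add S.zero s (S.e s) h
  rwa [zero_add, S.add_e] at h1

lemma neg_nonneg {a : A} (h : S.le a S.zero) : S.le S.zero (S.neg a) := by
  have h1 := S.add_le_add a S.zero (S.neg a) h
  rw [S.add_neg, zero_add] at h1
  exact S.le_trans _ _ _ (zero_le_mag (mag_e a)) h1

lemma neg_nonpos0 {a : A} (h : S.le S.zero a) (ha : S.e a = S.zero) :
    S.le (S.neg a) S.zero := by
  have h1 := antitone_neg h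
  rwa [neg_zero, zero_add, ha] at h1

end Neg

end SolidAux
namespace SolidAux

variable {A : Type*} {S : Solid A}

section MulBasic

lemma absorb_le' {x p : A} (h : S.add p x = x) : S.le p (S.e x) := by
  rw [S.add_comm] at h; exact absorb_le h

lemma mag_mul_left {p : A} (hp : IsMag S p) (w : A) : IsMag S (S.mul p w) := by
  obtain ⟨z, hz⟩ := S.escala p w
  rw [hp] at hz
  rw [hz]; exact mag_e z

lemma mag_mul_right {p : A} (hp : IsMag S p) (w : A) : IsMag S (S.mul w p) := by
  rw [S.mul_comm]; exact mag_mul_left hp w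

lemma amplif_mag {m y z : A} (hm : IsMag S m) (hy : S.le (S.e y) y) (h : S.le y z) :
    S.le (S.mul m y) (S.mul m z) := by
  have := S.amplification m y z hy h
  rwa [hm] at this

lemma neg_mul_mag {p : A} (hp : IsMag S p) (w : A) : S.mul p (S.neg w) = S.mul p w := by
  rw [S.mul_comm p (S.neg w), ← S.neg_mul, S.mul_comm w p]
  exact neg_mag (mag_mul_left hp w)

lemma e_neg_le_neg {w : A} (hw : S.le w (S.e w)) : S.le (S.e (S.neg w)) (S.neg w) := by
  rw [S.e_neg]
  have h1 := S.add_le_add w (S.e w) (S.neg w) hw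
  rw [S.add_neg] at h1
  have h2 : S.add (S.e w) (S.neg w) = S.neg w := by
    have := S.add_e (S.neg w)
    rw [S.e_neg] at this
    rw [S.add_comm]; exact this
  rwa [h2] at h1

lemma mag_mul_mono {p q : A} (hp : IsMag S p) (hq : IsMag S q) (h : S.le p q) (w : A) :
    S.le (S.mul w p) (S.mul w q) := by
  by_cases hzw : w = S.e w
  · rw [hzw]
    exact S.amplification w p q (by rw [hp]; exact S.le_refl p) h
  rcases S.le_total (S.e w) w with hw | hw
  · exact S.compat_mul w p q hw (Ne.symm hzw) h
  · have hnw : S.le (S.e (S.neg w)) (S.neg w) := e_neg_le_neg hw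
    have hzn : S.e (S.neg w) ≠ S.neg w := by
      rw [S.e_neg]
      intro hh
      apply hzw
      calc w = S.neg (S.neg w) := (neg_neg w).symm
        _ = S.neg (S.e w) := by rw [hh]
        _ = S.e w := neg_mag (mag_e w)
    have h1 := S.compat_mul (S.neg w) p q hnw hzn h
    have e1 : S.mul (S.neg w) p = S.mul w p := by
      rw [← S.neg_mul]
      exact neg_mag (mag_mul_right hp w)
    have e2 : S.mul (S.neg w) q = S.mul w q := by
      rw [← S.neg_mul]
      exact neg_mag (mag_mul_right hq w)
    rwa [e1, e2] at h1

lemma mul_mag_add {p q : A} (hp : IsMag S p) (hq : IsMag S q) (w : A) :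
    S.mul w (S.add p q) = S.add (S.mul w p) (S.mul w q) := by
  rcases S.le_total p q with h | h
  · rw [mag_absorb hp hq h]
    exact (mag_absorb (mag_mul_right hp w) (mag_mul_right hq w)
      (mag_mul_mono hp hq h w)).symm
  · rw [S.add_comm p q, mag_absorb hq hp h, S.add_comm (S.mul w p)]
    exact (mag_absorb (mag_mul_right hq w) (mag_mul_right hp w)
      (mag_mul_mono hq hp h w)).symm

/-- e w ⊠ p ≤ w ⊠ p for magnitude p -/
lemma e_mul_le {p : A} (hp : IsMag S p) (w : A) :
    S.le (S.mul (S.e w) p) (S.mul w p) := by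
  have h := S.e_mul w p
  have h1 : S.le (S.mul (S.e w) p) (S.e (S.mul w p)) := by
    rw [h]
    exact le_add_left (mag_mul_left (mag_e w) p) (mag_mul_left (mag_e p) w)
  rwa [show S.e (S.mul w p) = S.mul w p from mag_mul_right hp w] at h1

lemma mag_subdist {p : A} (hp : IsMag S p) (y z : A) :
    S.le (S.mul p (S.add y z)) (S.add (S.mul p y) (S.mul p z)) := by
  have h := S.dist p y z
  rw [hp] at h
  have h2 : S.add (S.mul p (S.add y z)) (S.add (S.mul p y) (S.mul p z))
      = S.add (S.mul p y) (S.mul p z) := by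
    rw [S.add_assoc]
    exact h.symm
  have := absorb_le' h2
  rwa [show S.e (S.add (S.mul p y) (S.mul p z)) = S.add (S.mul p y) (S.mul p z) from
    mag_add (mag_mul_left hp y) (mag_mul_left hp z)] at this

/-- C1 -/
lemma mag_mul_decomp {p w d : A} (hp : IsMag S p) (hw : w = S.add d (S.e w))
    (hd : S.e d = S.zero) :
    S.mul p w = S.add (S.mul p d) (S.mul p (S.e w)) := by
  apply S.le_antisymm
  · have h := mag_subdist hp d (S.e w)
    rwa [← hw] at h
  · apply mag_add_le (mag_mul_left hp d) (mag_mul_left hp (S.e w))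
    · rcases S.le_total S.zero d with hpos | hneg
      · apply amplif_mag hp (by rw [hd]; exact hpos)
        have h2 := le_add_mag (S := S) (x := d) (mag_e (S := S) w)
        rwa [← hw] at h2
      · have h0 : S.le S.zero (S.neg d) := neg_nonneg hneg
        have hnw : S.neg w = S.add (S.neg d) (S.e w) := by
          calc S.neg w = S.neg (S.add d (S.e w)) := by rw [← hw]
            _ = S.add (S.neg d) (S.neg (S.e w)) := neg_add _ _
            _ = S.add (S.neg d) (S.e w) := by rw [neg_mag (mag_e w)]
        have hdw : S.le (S.neg d) (S.neg w) := by
          have h2 := le_add_mag (S := S) (x := S.neg d) (mag_e (S := S) w)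
          rwa [← hnw] at h2
        have h1 := amplif_mag hp (by rw [S.e_neg, hd]; exact h0) hdw
        rwa [neg_mul_mag hp, neg_mul_mag hp] at h1
    · have h := e_mul_le hp w
      rwa [S.mul_comm (S.e w) p, S.mul_comm w p] at h

end MulBasic

end SolidAux
namespace SolidAux

variable {A : Type*} {S : Solid A}

section Units

/-- zeroless -/
def ZL (S : Solid A) (x : A) : Prop := x ≠ S.e x
/-- positive zeroless -/
def PZ (S : Solid A) (x : A) : Prop := S.le (S.e x) x ∧ x ≠ S.e x

lemma mag_not_zl {m : A} (hm : IsMag S m) : ¬ ZL S m := by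
  intro h; exact h hm.symm

lemma eq_mag_e {x m : A} (hm : IsMag S m) (h : x = m) : x = S.e x := by
  rw [h, ← hm] at *
  rw [e_e]

lemma u_zl {x : A} (hx : ZL S x) : ZL S (S.u x) := by
  intro h
  apply hx
  have h1 : x = S.mul x (S.e (S.u x)) := by
    conv_lhs => rw [← S.mul_u x hx]
    rw [← h]
  exact eq_mag_e (mag_mul_right (mag_e (S.u x)) x) h1

lemma u_idem (x : A) (hx : ZL S x) : S.mul (S.u x) (S.u x) = S.u x :=
  S.u_max x hx (S.u x) (S.mul_u x hx)

lemma inv_zl {x : A} (hx : ZL S x) : ZL S (S.inv x) := by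
  intro h
  apply u_zl hx
  have h1 : S.u x = S.mul x (S.e (S.inv x)) := by
    rw [← S.mul_inv x hx, ← h]
  exact eq_mag_e (mag_mul_right (mag_e (S.inv x)) x) h1

/-- e x ⊠ u x = e x -/
lemma e_mul_u {x : A} (hx : ZL S x) : S.mul (S.e x) (S.u x) = S.e x := by
  have h := S.e_mul x (S.u x)
  rw [S.mul_u x hx] at h
  have h2 : S.mul (S.e (S.u x)) x = S.mul (S.e x) (S.u x) := by
    rw [S.e_u x hx]
    calc S.mul (S.mul (S.e x) (S.inv x)) x = S.mul (S.e x) (S.mul (S.inv x) x) :=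
          (S.mul_assoc _ _ _).symm
      _ = S.mul (S.e x) (S.mul x (S.inv x)) := by rw [S.mul_comm (S.inv x) x]
      _ = S.mul (S.e x) (S.u x) := by rw [S.mul_inv x hx]
  rw [h2] at h
  rw [mag_idem (mag_mul_left (mag_e x) (S.u x))] at h
  exact h.symm

/-- rho x ⊠ x = e x -/
lemma rho_mul {x : A} (hx : ZL S x) : S.mul (S.e (S.u x)) x = S.e x := by
  rw [S.e_u x hx]
  calc S.mul (S.mul (S.e x) (S.inv x)) x = S.mul (S.e x) (S.mul (S.inv x) x) :=
        (S.mul_assoc _ _ _).symm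
    _ = S.mul (S.e x) (S.mul x (S.inv x)) := by rw [S.mul_comm (S.inv x) x]
    _ = S.mul (S.e x) (S.u x) := by rw [S.mul_inv x hx]
    _ = S.e x := e_mul_u hx

/-- rho x ⊠ u x = rho x -/
lemma rho_mul_u {x : A} (hx : ZL S x) : S.mul (S.e (S.u x)) (S.u x) = S.e (S.u x) := by
  have h := S.e_mul (S.u x) (S.u x)
  rw [u_idem x hx] at h
  rw [mag_idem (mag_mul_left (mag_e (S.u x)) (S.u x))] at h
  exact h.symm

lemma zl_neg {x : A} (hx : ZL S x) : ZL S (S.neg x) := by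
  intro h
  rw [S.e_neg] at h
  apply hx
  calc x = S.neg (S.neg x) := (neg_neg x).symm
    _ = S.neg (S.e x) := by rw [← h]
    _ = S.e x := neg_mag (mag_e x)

lemma u_neg {x : A} (hx : ZL S x) : S.u (S.neg x) = S.u x := by
  have hnx : ZL S (S.neg x) := zl_neg hx
  have h1 : S.mul (S.neg x) (S.u x) = S.neg x := by
    rw [← S.neg_mul, S.mul_u x hx]
  have h2 : S.mul (S.u (S.neg x)) (S.u x) = S.u (S.neg x) :=
    S.u_max (S.neg x) hnx (S.u x) h1
  have h3 : S.mul x (S.u (S.neg x)) = x := by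
    calc S.mul x (S.u (S.neg x)) = S.mul (S.neg (S.neg x)) (S.u (S.neg x)) := by
          rw [neg_neg]
      _ = S.neg (S.mul (S.neg x) (S.u (S.neg x))) := (S.neg_mul _ _).symm
      _ = S.neg (S.neg x) := by rw [S.mul_u (S.neg x) hnx]
      _ = x := neg_neg x
  have h4 : S.mul (S.u x) (S.u (S.neg x)) = S.u x := S.u_max x hx (S.u (S.neg x)) h3
  calc S.u (S.neg x) = S.mul (S.u (S.neg x)) (S.u x) := h2.symm
    _ = S.mul (S.u x) (S.u (S.neg x)) := S.mul_comm _ _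
    _ = S.u x := h4

/-- positive or negative -/
lemma zl_pos_or {x : A} (hx : ZL S x) : PZ S x ∨ (PZ S (S.neg x) ∧ S.le x (S.e x)) := by
  rcases S.le_total (S.e x) x with h | h
  · exact Or.inl ⟨h, hx⟩
  · right
    refine ⟨⟨e_neg_le_neg h, zl_neg hx⟩, h⟩

lemma u_pos {x : A} (hx : ZL S x) : PZ S (S.u x) := by
  have key : ∀ w : A, PZ S w → PZ S (S.u w) := by
    intro w hw
    refine ⟨?_, (u_zl hw.2)⟩
    by_contra hc
    rcases S.le_total (S.e (S.u w)) (S.u w) with h | h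
    · exact hc h
    · have h1 := S.compat_mul w (S.u w) (S.e (S.u w)) hw.1 (Ne.symm hw.2) h
      rw [S.mul_u w hw.2] at h1
      have h2 : S.mul w (S.e (S.u w)) = S.e w := by
        rw [S.mul_comm]; exact rho_mul hw.2
      rw [h2] at h1
      exact hw.2 (S.le_antisymm _ _ h1 hw.1)
  rcases zl_pos_or hx with h | h
  · exact key x h
  · have := key (S.neg x) h.1
    rwa [u_neg hx] at this

lemma inv_pos {x : A} (hx : PZ S x) : PZ S (S.inv x) := by
  have hzx : ZL S x := hx.2
  refine ⟨?_, inv_zl hzx⟩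
  by_contra hc
  rcases S.le_total (S.e (S.inv x)) (S.inv x) with h | h
  · exact hc h
  · have h1 := S.compat_mul x (S.inv x) (S.e (S.inv x)) hx.1 (Ne.symm hzx) h
    rw [S.mul_inv x hzx] at h1
    -- m := x ⊠ e (inv x) ≤ e (u x)
    have h2 : S.le (S.mul x (S.e (S.inv x))) (S.e (S.u x)) := by
      have he := S.e_u x hzx
      have hm := S.e_mul x (S.inv x)
      rw [S.mul_inv x hzx] at hm
      -- hm : e (u x) = e x ⊠ inv x ⊞ e (inv x) ⊠ x
      have : S.le (S.mul (S.e (S.inv x)) x) (S.e (S.u x)) := by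
        rw [hm]
        exact le_add_right (mag_mul_left (mag_e x) (S.inv x))
          (mag_mul_left (mag_e (S.inv x)) x)
      rwa [S.mul_comm (S.e (S.inv x)) x] at this
    have h3 := S.le_trans _ _ _ h1 h2
    have h4 := (u_pos hzx).1
    exact (u_zl hzx) (S.le_antisymm _ _ h3 h4)

/-- decomposition part bound : PZ w, w = d + e w, e d = 0 → e w ≤ d -/
lemma e_le_part {w d : A} (hw : PZ S w) (hd : w = S.add d (S.e w)) (hd0 : S.e d = S.zero) :
    S.le (S.e w) d := by
  rcases S.le_total (S.e w) d with h | h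
  · exact h
  · exfalso
    apply hw.2
    apply S.le_antisymm _ _ _ hw.1
    have h1 := S.add_le_add d (S.e w) (S.e w) h
    rw [mag_idem (mag_e w), ← hd] at h1
    exact h1

end Units

end SolidAux
namespace SolidAux

variable {A : Type*} {S : Solid A}

section Structure1

lemma e_eq_rho_part_pos {w d : A} (hw : PZ S w) (hd : w = S.add d (S.e w))
    (hd0 : S.e d = S.zero) : S.e w = S.mul (S.e (S.u w)) d := by
  have hz : ZL S w := hw.2
  have h1 : S.mul (S.e (S.u w)) w
      = S.add (S.mul (S.e (S.u w)) d) (S.mul (S.e (S.u w)) (S.e w)) :=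
    mag_mul_decomp (mag_e (S.u w)) hd hd0
  rw [rho_mul hz] at h1
  have h2 : S.le (S.mul (S.e (S.u w)) (S.e w)) (S.mul (S.e (S.u w)) d) := by
    apply amplif_mag (mag_e (S.u w)) (by rw [e_e]; exact S.le_refl _)
    exact e_le_part hw hd hd0
  rw [S.add_comm, mag_absorb (mag_mul_left (mag_e (S.u w)) (S.e w))
    (mag_mul_left (mag_e (S.u w)) d) h2] at h1
  exact h1

lemma e_eq_rho_part {x a : A} (hx : ZL S x) (ha : x = S.add a (S.e x))
    (ha0 : S.e a = S.zero) : S.e x = S.mul (S.e (S.u x)) a := by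
  rcases zl_pos_or hx with h | ⟨hn, _⟩
  · exact e_eq_rho_part_pos h ha ha0
  · have hd : S.neg x = S.add (S.neg a) (S.e (S.neg x)) := by
      rw [S.e_neg]
      calc S.neg x = S.neg (S.add a (S.e x)) := by rw [← ha]
        _ = S.add (S.neg a) (S.neg (S.e x)) := neg_add _ _
        _ = S.add (S.neg a) (S.e x) := by rw [neg_mag (mag_e x)]
    have h1 := e_eq_rho_part_pos hn hd (by rw [S.e_neg, ha0])
    rw [S.e_neg, u_neg hx] at h1
    rw [h1, neg_mul_mag (mag_e (S.u x)) a]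

/-- S0 : relative uncertainty at most one -/
lemma rho_le_one {x : A} (hx : ZL S x) : S.le (S.e (S.u x)) S.one := by
  rcases S.le_total (S.e (S.u x)) S.one with h | h
  · exact h
  · exfalso
    have key : ∀ w, PZ S w → S.le S.one (S.e (S.u w)) → False := by
      intro w hw h1
      obtain ⟨a, ha, ha0⟩ := S.decomp w
      have haz : a ≠ S.zero := by
        intro hz
        rw [hz, zero_add] at ha
        exact hw.2 ha
      have hapos : S.le S.zero a := by
        rcases S.le_total S.zero a with h' | h'
        · exact h'
        · exfalso
          apply hw.2
          apply S.le_antisymm _ _ _ hw.1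
          have h2 := S.add_le_add a S.zero (S.e w) h'
          rw [zero_add, ← ha] at h2
          exact h2
      have hazl : ZL S a := by
        intro h'; exact haz (h'.trans ha0)
      have h2 := S.compat_mul a S.one (S.e (S.u w)) (by rw [ha0]; exact hapos)
        (by rw [ha0]; exact fun h' => haz h'.symm) h1
      rw [S.mul_comm a S.one, S.one_mul] at h2
      -- h2 : a ≤ a ⊠ ρ w
      have h3 : S.le (S.mul a (S.e (S.u w))) (S.e w) := by
        have h4 : S.mul (S.e (S.u w)) w
            = S.add (S.mul (S.e (S.u w)) a) (S.mul (S.e (S.u w)) (S.e w)) :=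
          mag_mul_decomp (mag_e (S.u w)) ha ha0
        rw [rho_mul hw.2] at h4
        have : S.le (S.mul (S.e (S.u w)) a) (S.e w) := by
          rw [h4]
          exact le_add_left (mag_mul_left (mag_e (S.u w)) a)
            (mag_mul_left (mag_e (S.u w)) (S.e w))
        rwa [S.mul_comm] at this
      have h5 : S.le a (S.e w) := S.le_trans _ _ _ h2 h3
      have h6 : S.le (S.e w) a := e_le_part hw ha ha0
      have h7 : a = S.e w := S.le_antisymm _ _ h5 h6
      have h8 : S.e a = S.e w := by rw [h7, e_e]
      apply haz
      rw [h7, ← h8, ha0]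
    rcases zl_pos_or hx with hp | ⟨hn, _⟩
    · exact key x hp h
    · apply key (S.neg x) hn
      rwa [u_neg hx]

end Structure1

end SolidAux
namespace SolidAux

variable {A : Type*} {S : Solid A}

section OneZero

lemma exists_PZ (S : Solid A) : ∃ s, PZ S s := by
  obtain ⟨x₀, h0, _⟩ := S.exists_neutrix
  obtain ⟨z, hz, h0z, _, _, _⟩ := S.dense S.zero (S.e x₀) e_zero.symm (e_e x₀).symm
    (zero_le_mag (mag_e x₀)) (fun h => h0 h.symm)
  exact ⟨z, pos_e_le h0z, hz⟩

lemma one_zl : ZL S S.one := by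
  intro h
  obtain ⟨s, hs⟩ := exists_PZ S
  apply hs.2
  have h1 : s = S.mul (S.e S.one) s := by
    conv_lhs => rw [← S.one_mul s, h]
  exact eq_mag_e (mag_mul_left (mag_e S.one) s) h1

lemma e_one_mul_le (x : A) : S.le (S.mul (S.e S.one) x) (S.e x) := by
  have h := S.e_mul S.one x
  rw [S.one_mul] at h
  rw [show S.mul (S.e x) S.one = S.e x from by rw [S.mul_comm]; exact S.one_mul _] at h
  conv_rhs => rw [h]
  exact le_add_left (mag_mul_left (mag_e S.one) x) (mag_e x)

lemma e_one_le_one : S.le (S.e S.one) S.one := by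
  rcases S.le_total (S.e S.one) S.one with h | h
  · exact h
  · exfalso
    obtain ⟨s, hs⟩ := exists_PZ S
    have h1 := S.compat_mul s S.one (S.e S.one) hs.1 (Ne.symm hs.2) h
    rw [S.mul_comm s S.one, S.one_mul] at h1
    have h2 : S.le (S.mul s (S.e S.one)) (S.e s) := by
      rw [S.mul_comm]; exact e_one_mul_le s
    exact hs.2 (S.le_antisymm _ _ (S.le_trans _ _ _ h1 h2) hs.1)

lemma one_pz : PZ S S.one := ⟨e_one_le_one, one_zl⟩

lemma zero_le_one : S.le S.zero S.one :=
  S.le_trans _ _ _ (zero_le_mag (mag_e S.one)) e_one_le_one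

lemma u_one : S.u S.one = S.one := by
  have h := S.mul_u S.one one_zl
  rwa [S.one_mul] at h

lemma e_one : S.e S.one = S.zero := by
  obtain ⟨a, ha, ha0⟩ := S.decomp S.one
  have haz : a ≠ S.zero := by
    intro hz
    rw [hz, zero_add] at ha
    exact one_zl ha
  have h1 : S.e S.one = S.mul (S.e (S.u S.one)) a := e_eq_rho_part one_zl ha ha0
  rw [u_one] at h1
  have h2 : S.le (S.mul (S.e S.one) a) (S.e a) := e_one_mul_le a
  rw [ha0] at h2
  rw [← h1] at h2
  exact S.le_antisymm _ _ h2 (zero_le_mag (mag_e S.one))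

lemma zero_mul_le (w : A) : S.le (S.mul S.zero w) (S.e w) := by
  rw [← e_one]; exact e_one_mul_le w

lemma zero_mul_part {a : A} (ha0 : S.e a = S.zero) : S.mul S.zero a = S.zero := by
  apply S.le_antisymm
  · have h := zero_mul_le (S := S) a; rwa [ha0] at h
  · exact zero_le_mag (mag_mul_left mag_zero a)

lemma zero_mul_zero : S.mul S.zero S.zero = S.zero := zero_mul_part e_zero

lemma zero_mul_e (w : A) : S.mul S.zero w = S.mul S.zero (S.e w) := by
  obtain ⟨a, ha, ha0⟩ := S.decomp w
  rw [mag_mul_decomp mag_zero ha ha0, zero_mul_part ha0, zero_add]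

lemma zero_mul_le_one {m : A} (hm : IsMag S m) (h : S.le m S.one) :
    S.mul S.zero m = S.zero := by
  apply S.le_antisymm
  · have h1 := amplif_mag mag_zero (by rw [hm]; exact S.le_refl m) h
    rwa [S.mul_comm S.zero S.one, S.one_mul] at h1
  · exact zero_le_mag (mag_mul_left mag_zero m)

lemma rho_zero {t : A} (ht : ZL S t) (ht0 : S.e t = S.zero) :
    S.e (S.u t) = S.zero := by
  have h1 : S.e (S.u t) = S.mul S.zero (S.inv t) := by
    rw [S.e_u t ht, ht0]
  obtain ⟨a', ha', ha'0⟩ := S.decomp (S.inv t)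
  have h2 : S.e (S.inv t) = S.mul (S.e (S.u t)) a' := by
    have := e_eq_rho_part (inv_zl ht) ha' ha'0
    rwa [S.u_inv t ht] at this
  have h3 : S.mul S.zero (S.inv t) = S.mul S.zero (S.e (S.u t)) := by
    calc S.mul S.zero (S.inv t) = S.mul S.zero (S.e (S.inv t)) := zero_mul_e _
      _ = S.mul S.zero (S.mul (S.e (S.u t)) a') := by rw [h2]
      _ = S.mul S.zero (S.mul a' (S.e (S.u t))) := by rw [S.mul_comm (S.e (S.u t)) a']
      _ = S.mul (S.mul S.zero a') (S.e (S.u t)) := S.mul_assoc _ _ _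
      _ = S.mul S.zero (S.e (S.u t)) := by rw [zero_mul_part ha'0]
  apply S.le_antisymm
  · rw [h1, h3]
    have := zero_mul_le_one (mag_e (S.u t)) (rho_le_one ht)
    rw [this]
    exact S.le_refl _
  · exact zero_le_mag (mag_e (S.u t))

lemma zero_mul_inv {b : A} (hb : ZL S b) (hb0 : S.e b = S.zero) :
    S.mul S.zero (S.inv b) = S.zero := by
  obtain ⟨a', ha', ha'0⟩ := S.decomp (S.inv b)
  have h2 : S.e (S.inv b) = S.mul (S.e (S.u b)) a' := by
    have := e_eq_rho_part (inv_zl hb) ha' ha'0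
    rwa [S.u_inv b hb] at this
  rw [rho_zero hb hb0] at h2
  rw [zero_mul_part ha'0] at h2
  rw [zero_mul_e, h2, zero_mul_zero]

end OneZero

end SolidAux
namespace SolidAux

variable {A : Type*} {S : Solid A}

section U1

lemma u_part_eq_one {a : A} (ha : ZL S a) (ha0 : S.e a = S.zero) :
    S.u a = S.one := by
  suffices key : ∀ b, PZ S b → S.e b = S.zero → S.u b = S.one by
    rcases zl_pos_or ha with h | ⟨hn, _⟩
    · exact key a h ha0
    · have := key (S.neg a) hn (by rw [S.e_neg, ha0])
      rwa [u_neg ha] at this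
  intro b hb hb0
  have hbzl : ZL S b := hb.2
  have hb0' : S.le S.zero b := by rw [← hb0]; exact hb.1
  set v := S.u b with hv
  have hv0 : S.e v = S.zero := rho_zero hbzl hb0
  have hvzl : ZL S v := u_zl hbzl
  set g := S.add v (S.neg S.one) with hg
  have hg0 : S.e g = S.zero := by
    rw [hg, e_add_eq, S.e_neg, hv0, e_one, S.add_zero]
  have mul_g : ∀ t, S.e t = S.zero → S.mul t v = t → S.mul t g = S.zero := by
    intro t ht0 htu
    have hd := S.dist t v (S.neg S.one)
    rw [ht0] at hd
    have z1 : S.mul S.zero v = S.zero := by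
      rw [zero_mul_e, hv0, zero_mul_zero]
    have z2 : S.mul S.zero (S.neg S.one) = S.zero := by
      rw [neg_mul_mag mag_zero, S.mul_comm, S.one_mul]
    rw [z1, z2, S.add_zero, S.add_zero, htu] at hd
    have z3 : S.mul t (S.neg S.one) = S.neg t := by
      rw [S.mul_comm, ← S.neg_mul, S.one_mul]
    rw [z3, S.add_neg, ht0] at hd
    exact hd.symm
  have hAg : S.mul b g = S.zero := mul_g b hb0 (S.mul_u b hbzl)
  have hvg : S.mul v g = S.zero := mul_g v hv0 (u_idem b hbzl)
  by_cases hgz : g = S.zero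
  · show v = S.one
    calc v = S.add v (S.e S.one) := by rw [e_one, S.add_zero]
      _ = S.add v (S.add (S.neg S.one) S.one) := by
          rw [show S.add (S.neg S.one) S.one = S.e S.one from by
            rw [S.add_comm]; exact S.add_neg S.one]
      _ = S.add g S.one := S.add_assoc _ _ _
      _ = S.one := by rw [hgz, zero_add]
  · have hgzl : ZL S g := fun h => hgz (h.trans hg0)
    -- choose positive representative c of g
    obtain ⟨c, hcpos, hc0, hbc, hvc, hcuc⟩ :
        ∃ c, PZ S c ∧ S.e c = S.zero ∧ S.mul b c = S.zero ∧ S.mul v c = S.zero ∧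
          S.mul c (S.u c) = c := by
      rcases zl_pos_or hgzl with h | ⟨hn, _⟩
      · exact ⟨g, h, hg0, hAg, hvg, S.mul_u g hgzl⟩
      · refine ⟨S.neg g, hn, by rw [S.e_neg, hg0], ?_, ?_, ?_⟩
        · rw [S.mul_comm, ← S.neg_mul, S.mul_comm, hAg, neg_zero]
        · rw [S.mul_comm, ← S.neg_mul, S.mul_comm, hvg, neg_zero]
        · exact S.mul_u (S.neg g) (zl_neg hgzl)
    have hczl : ZL S c := hcpos.2
    have hc0' : S.le S.zero c := by rw [← hc0]; exact hcpos.1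
    -- b ⊠ u c = 0
    have hbuc : S.mul b (S.u c) = S.zero := by
      have h1 : S.mul (S.mul b c) (S.inv c) = S.mul S.zero (S.inv c) := by rw [hbc]
      rw [← S.mul_assoc, S.mul_inv c hczl, zero_mul_inv hczl hc0] at h1
      exact h1
    rcases S.le_total v (S.u c) with hle | hle
    · have h1 := S.compat_mul b v (S.u c) hb.1 (Ne.symm hbzl) hle
      rw [S.mul_u b hbzl, hbuc] at h1
      exact (hbzl (S.le_antisymm _ _ (by rw [hb0]; exact h1) hb.1)).elim
    · have h1 := S.compat_mul c (S.u c) v hcpos.1 (Ne.symm hczl) hle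
      rw [hcuc, S.mul_comm c v, hvc] at h1
      exact (hczl (S.le_antisymm _ _ (by rw [hc0]; exact h1) hcpos.1)).elim

lemma part_mul_e {a b : A} (ha0 : S.e a = S.zero) (hb0 : S.e b = S.zero) :
    S.e (S.mul a b) = S.zero := by
  rw [S.e_mul, ha0, hb0]
  rw [zero_mul_e b, hb0, zero_mul_zero, zero_mul_e a, ha0, zero_mul_zero, S.add_zero]

lemma part_mul_zl {a b : A} (ha : ZL S a) (ha0 : S.e a = S.zero)
    (hb : ZL S b) (hb0 : S.e b = S.zero) : ZL S (S.mul a b) := by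
  intro h
  rw [part_mul_e ha0 hb0] at h
  -- h : a ⊠ b = 0
  have h1 : S.mul (S.mul a b) (S.inv b) = S.mul S.zero (S.inv b) := by rw [h]
  rw [← S.mul_assoc, S.mul_inv b hb, zero_mul_inv hb hb0, u_part_eq_one hb hb0,
    S.mul_comm a S.one, S.one_mul] at h1
  exact ha (h1.trans ha0.symm)

lemma mag_cancel {p q P : A} (hP : ZL S P) (hP0 : S.e P = S.zero)
    (h : S.mul p P = S.mul q P) : p = q := by
  have h1 : S.mul (S.mul p P) (S.inv P) = S.mul (S.mul q P) (S.inv P) := by rw [h]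
  rw [← S.mul_assoc, ← S.mul_assoc, S.mul_inv P hP, u_part_eq_one hP hP0,
    S.mul_comm p S.one, S.one_mul, S.mul_comm q S.one, S.one_mul] at h1
  exact h1

end U1

end SolidAux
namespace SolidAux

variable {A : Type*} {S : Solid A}

section Mmax

lemma mag_le_eM {k : A} (hk : IsMag S k) : S.le k (S.e S.M) := by
  have h1 := S.e_add_M k
  rw [hk] at h1
  have h2 : S.add S.M k = S.M := by rw [S.add_comm]; exact h1
  have h3 := S.e_max S.M k h2
  have h4 : S.add k (S.e S.M) = S.e S.M := by rw [S.add_comm]; exact h3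
  exact (S.le_e S.M k h4).1

lemma t_add_eM {t : A} (h1 : S.le t (S.e S.M)) (h2 : S.le (S.neg t) (S.e S.M)) :
    S.add t (S.e S.M) = S.e S.M := by
  apply S.le_antisymm
  · have h3 := S.add_le_add t (S.e S.M) (S.e S.M) h1
    rwa [mag_idem (mag_e S.M)] at h3
  · have h4 : S.e S.M = S.add (S.e t) (S.e S.M) :=
      (mag_absorb (mag_e t) (mag_e S.M) (mag_le_eM (mag_e t))).symm
    have h5 : S.le (S.add (S.neg t) (S.e S.M)) (S.e S.M) := by
      have := S.add_le_add (S.neg t) (S.e S.M) (S.e S.M) h2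
      rwa [mag_idem (mag_e S.M)] at this
    have h6 : S.le (S.add t (S.add (S.neg t) (S.e S.M))) (S.add t (S.e S.M)) :=
      add_le_add_left t h5
    have h7 : S.e S.M = S.add t (S.add (S.neg t) (S.e S.M)) := by
      rw [S.add_assoc, S.add_neg]
      exact h4
    conv_lhs => rw [h7]
    exact h6

lemma not_all_le_one : ¬ (∀ k, IsMag S k → S.le k S.one) := by
  intro hall
  obtain ⟨x₀, h0, _⟩ := S.exists_neutrix
  obtain ⟨σ, hσzl, hσ0, _, hσle, _⟩ := S.dense S.zero (S.e x₀) e_zero.symm (e_e x₀).symm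
    (zero_le_mag (mag_e x₀)) (fun h => h0 h.symm)
  have σpz : PZ S σ := ⟨pos_e_le hσ0, hσzl⟩
  have ipz : PZ S (S.inv σ) := inv_pos σpz
  have tpz : PZ S (S.u σ) := u_pos hσzl
  set i := S.inv σ with hi
  set t := S.u σ with ht
  -- σ + σ ≤ e x₀
  have h2σ : S.le (S.add σ σ) (S.e x₀) := by
    have a1 := S.add_le_add σ (S.e x₀) σ hσle
    have a2 : S.le (S.add (S.e x₀) σ) (S.e x₀) := by
      have := S.add_le_add σ (S.e x₀) (S.e x₀) hσle
      rw [mag_idem (mag_e x₀)] at this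
      rwa [S.add_comm]
    exact S.le_trans _ _ _ a1 a2
  have hm1 : S.le (S.mul i (S.add σ σ)) (S.mul i (S.e x₀)) :=
    S.compat_mul i _ _ ipz.1 (Ne.symm ipz.2) h2σ
  -- i ⊠ σ = t
  have hiσ : S.mul i σ = t := by
    rw [S.mul_comm]; exact S.mul_inv σ hσzl
  -- e i ⊠ σ ≤ e t
  have hJ : S.le (S.mul (S.e i) σ) (S.e t) := by
    have h := S.e_mul σ i
    rw [S.mul_inv σ hσzl] at h
    rw [h]
    exact le_add_right (mag_mul_left (mag_e σ) i) (mag_mul_left (mag_e i) σ)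
  -- t + t = i(σ+σ) + e i ⊠ σ
  have hdist := S.dist i σ σ
  rw [hiσ] at hdist
  have htt : S.add t t
      = S.add (S.mul i (S.add σ σ)) (S.mul (S.e i) σ) := by
    rw [hdist, ← S.add_assoc, mag_idem (mag_mul_left (mag_e i) σ)]
  -- t + t ≤ one
  have htt1 : S.le (S.add t t) S.one := by
    rw [htt]
    have b1 : S.le (S.add (S.mul i (S.add σ σ)) (S.mul (S.e i) σ))
        (S.add (S.mul i (S.e x₀)) (S.e t)) := by
      have c1 := S.add_le_add (S.mul i (S.add σ σ)) (S.mul i (S.e x₀))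
        (S.mul (S.e i) σ) hm1
      have c2 := add_le_add_left (S.mul i (S.e x₀)) hJ
      exact S.le_trans _ _ _ c1 c2
    refine S.le_trans _ _ _ b1 ?_
    apply mag_add_le (mag_mul_right (mag_e x₀) i) (mag_e t)
    · exact hall _ (mag_mul_right (mag_e x₀) i)
    · exact hall _ (mag_e t)
  -- t(t+t) ≤ t
  have h3 : S.le (S.mul t (S.add t t)) t := by
    have := S.compat_mul t (S.add t t) S.one tpz.1 (Ne.symm tpz.2) htt1
    rwa [S.mul_comm t S.one, S.one_mul] at this
  -- t + t = t(t+t) + e t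
  have hdist2 := S.dist t t t
  rw [u_idem σ hσzl] at hdist2
  have het : S.mul (S.e t) t = S.e t := rho_mul_u hσzl
  rw [het] at hdist2
  have htt2 : S.add t t = S.add (S.mul t (S.add t t)) (S.e t) := by
    conv_lhs => rw [hdist2]
    rw [← S.add_assoc, mag_idem (mag_e t)]
  -- t + t ≤ t
  have htt3 : S.le (S.add t t) t := by
    rw [htt2]
    have := S.add_le_add (S.mul t (S.add t t)) t (S.e t) h3
    rwa [S.add_e] at this
  -- cancel: t ≤ e t
  have h4 : S.le t (S.e t) := by
    have h5 : S.le (S.add t t) (S.add (S.e t) t) := by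
      rw [S.add_comm (S.e t) t, S.add_e]; exact htt3
    have h6 := cancel_le h5
    have h7 : S.add (S.e t) (S.e t) = S.e t := mag_idem (mag_e t)
    rwa [h7] at h6
  exact tpz.2 (S.le_antisymm _ _ h4 tpz.1)

lemma not_M_le_one : ¬ S.le S.M S.one := by
  intro h
  rcases S.le_total (S.e S.M) S.one with hV1 | h1V
  · exact not_all_le_one (fun k hk => S.le_trans _ _ _ (mag_le_eM hk) hV1)
  · by_cases hM : S.M = S.e S.M
    · have h1 : S.le (S.e S.M) S.one := by rw [← hM]; exact h
      have h2 : S.e S.M = S.one := S.le_antisymm _ _ h1 h1V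
      apply one_zl
      rw [← h2, e_e]
    · -- M zeroless
      have hVW : S.le (S.e S.M) (S.add S.one (S.neg S.M)) := by
        have h1 := S.add_le_add S.M S.one (S.neg S.M) h
        rwa [S.add_neg] at h1
      have hneg1 : S.le (S.neg S.one) S.zero := neg_nonpos0 (zero_le_one (S := S)) e_one
      have hV2 : S.add (S.neg S.one) (S.e S.M) = S.e S.M := by
        apply t_add_eM
        · exact S.le_trans _ _ _ hneg1 (zero_le_mag (mag_e S.M))
        · rw [neg_neg]; exact h1V
      have hVleW : S.le (S.e S.M) (S.neg S.M) := by
        have s1 := add_le_add_left (S.neg S.one) hVW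
        rw [hV2] at s1
        have e3 : S.add (S.neg S.one) (S.add S.one (S.neg S.M)) = S.neg S.M := by
          rw [S.add_assoc, show S.add (S.neg S.one) S.one = S.e S.one from by
            rw [S.add_comm]; exact S.add_neg S.one, e_one, zero_add]
        rwa [e3] at s1
      have hWzl : ZL S (S.neg S.M) := by
        intro hW
        rw [S.e_neg] at hW
        apply hM
        calc S.M = S.neg (S.neg S.M) := (neg_neg S.M).symm
          _ = S.neg (S.e S.M) := by rw [← hW]
          _ = S.e S.M := neg_mag (mag_e S.M)
      obtain ⟨aM, haM, haM0⟩ := S.decomp S.M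
      have hW : S.neg S.M = S.add (S.neg aM) (S.e S.M) := by
        calc S.neg S.M = S.neg (S.add aM (S.e S.M)) := by rw [← haM]
          _ = S.add (S.neg aM) (S.neg (S.e S.M)) := neg_add _ _
          _ = S.add (S.neg aM) (S.e S.M) := by rw [neg_mag (mag_e S.M)]
      have hh0 : S.e (S.neg aM) = S.zero := by rw [S.e_neg, haM0]
      have hhne : S.neg aM ≠ S.zero := by
        intro hz
        rw [hz, zero_add] at hW
        apply hWzl
        rw [hW, e_e]
      have hhzl : ZL S (S.neg aM) := fun h' => hhne (h'.trans hh0)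
      have hhpos : S.le S.zero (S.neg aM) := by
        rcases S.le_total S.zero (S.neg aM) with h' | h'
        · exact h'
        · exfalso
          apply hWzl
          have hle : S.le (S.neg S.M) (S.e S.M) := by
            rw [hW]
            have h2 := S.add_le_add (S.neg aM) S.zero (S.e S.M) h'
            rwa [zero_add] at h2
          have heq : S.neg S.M = S.e S.M := S.le_antisymm _ _ hle hVleW
          rw [S.e_neg]
          exact heq
      have hVh : S.le (S.e S.M) (S.neg aM) := by
        rcases S.le_total (S.e S.M) (S.neg aM) with h' | h'
        · exact h'
        · exfalso
          apply hWzl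
          have hnn : S.le (S.neg (S.neg aM)) (S.e S.M) :=
            S.le_trans _ _ _ (neg_nonpos0 hhpos hh0) (zero_le_mag (mag_e S.M))
          have h2 := t_add_eM h' hnn
          rw [S.e_neg]
          rw [hW, h2]
      have huh : S.u (S.neg aM) = S.one := u_part_eq_one hhzl hh0
      have jpz : PZ S (S.inv (S.neg aM)) := inv_pos ⟨by rw [hh0]; exact hhpos, hhzl⟩
      apply not_all_le_one (S := S)
      intro k hk
      have hk2 : IsMag S (S.mul k (S.neg aM)) := by
        rw [← hk]; exact mag_mul_left (mag_e k) (S.neg aM)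
      have hk2V : S.le (S.mul k (S.neg aM)) (S.neg aM) :=
        S.le_trans _ _ _ (mag_le_eM hk2) hVh
      have h1 := S.compat_mul (S.inv (S.neg aM)) (S.mul k (S.neg aM)) (S.neg aM)
        jpz.1 (Ne.symm jpz.2) hk2V
      have e1 : S.mul (S.inv (S.neg aM)) (S.neg aM) = S.one := by
        rw [S.mul_comm, S.mul_inv (S.neg aM) hhzl, huh]
      have e2 : S.mul (S.inv (S.neg aM)) (S.mul k (S.neg aM)) = k := by
        calc S.mul (S.inv (S.neg aM)) (S.mul k (S.neg aM))
            = S.mul (S.inv (S.neg aM)) (S.mul (S.neg aM) k) := by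
              rw [S.mul_comm k (S.neg aM)]
          _ = S.mul (S.mul (S.inv (S.neg aM)) (S.neg aM)) k := S.mul_assoc _ _ _
          _ = S.mul S.one k := by rw [e1]
          _ = k := S.one_mul k
      rwa [e1, e2] at h1

end Mmax

end SolidAux
namespace SolidAux

variable {A : Type*} {S : Solid A}

section Reduction

lemma add_left_comm' (a b c : A) : S.add a (S.add b c) = S.add b (S.add a c) := by
  rw [S.add_assoc, S.add_comm a b, ← S.add_assoc]

lemma add_right_comm' (a b c : A) : S.add (S.add a b) c = S.add (S.add a c) b := by
  rw [← S.add_assoc, S.add_comm b c, S.add_assoc]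

lemma mul4 (p a q b : A) :
    S.mul (S.mul p a) (S.mul q b) = S.mul (S.mul p q) (S.mul a b) := by
  rw [← S.mul_assoc p a (S.mul q b), S.mul_assoc a q b, S.mul_comm a q,
    ← S.mul_assoc q a b, S.mul_assoc p q (S.mul a b)]

lemma part_zl {x a : A} (hx : x ≠ S.e x) (ha : x = S.add a (S.e x))
    (ha0 : S.e a = S.zero) : a ≠ S.e a := by
  intro h
  have h2 : a = S.zero := h.trans ha0
  rw [h2, zero_add] at ha
  exact hx ha

lemma part_dist {a b c : A} (ha0 : S.e a = S.zero) (hb0 : S.e b = S.zero)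
    (hc0 : S.e c = S.zero) :
    S.mul a (S.add b c) = S.add (S.mul a b) (S.mul a c) := by
  have h := S.dist a b c
  rw [ha0, zero_mul_part hb0, zero_mul_part hc0, S.add_zero, S.add_zero] at h
  exact h.symm

lemma mag_mul_e_le_part {p w d : A} (hp : IsMag S p) (hzw : w ≠ S.e w)
    (hd : w = S.add d (S.e w)) (hd0 : S.e d = S.zero) :
    S.le (S.mul p (S.e w)) (S.mul p d) := by
  rcases zl_pos_or hzw with h | ⟨hn, _⟩
  · exact amplif_mag hp (by rw [e_e]; exact S.le_refl _) (e_le_part h hd hd0)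
  · have hd' : S.neg w = S.add (S.neg d) (S.e (S.neg w)) := by
      rw [S.e_neg]
      calc S.neg w = S.neg (S.add d (S.e w)) := by rw [← hd]
        _ = S.add (S.neg d) (S.neg (S.e w)) := neg_add _ _
        _ = S.add (S.neg d) (S.e w) := by rw [neg_mag (mag_e w)]
    have h1 := e_le_part hn hd' (by rw [S.e_neg, hd0])
    rw [S.e_neg] at h1
    have h2 := amplif_mag hp (by rw [e_e]; exact S.le_refl _) h1
    rwa [neg_mul_mag hp] at h2

lemma mag_mul_eq_part {p w d : A} (hp : IsMag S p) (hzw : w ≠ S.e w)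
    (hd : w = S.add d (S.e w)) (hd0 : S.e d = S.zero) :
    S.mul p w = S.mul p d := by
  rw [mag_mul_decomp hp hd hd0, S.add_comm]
  exact mag_absorb (mag_mul_left hp (S.e w)) (mag_mul_left hp d)
    (mag_mul_e_le_part hp hzw hd hd0)

/-- main reduction: existence of parts representation -/
lemma keyE {x y z : A} (hx : x ≠ S.e x) (hy : y ≠ S.e y) (hz : z ≠ S.e z) :
    ∃ P Q : A,
      S.e P = S.zero ∧ P ≠ S.e P ∧ S.e Q = S.zero ∧ Q ≠ S.e Q ∧
      S.mul (S.e x) y = S.mul (S.e (S.u x)) P ∧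
      S.mul (S.e x) z = S.mul (S.e (S.u x)) Q ∧
      S.mul (S.e (S.add y z)) x
        = S.add (S.mul (S.e (S.u y)) P) (S.mul (S.e (S.u z)) Q) ∧
      S.mul (S.e x) (S.add y z)
        = S.add (S.add (S.mul (S.e (S.u x)) (S.add P Q))
            (S.mul (S.mul (S.e (S.u x)) (S.e (S.u y))) P))
            (S.mul (S.mul (S.e (S.u x)) (S.e (S.u z))) Q) := by
  obtain ⟨a, ha, ha0⟩ := S.decomp x
  obtain ⟨b, hb, hb0⟩ := S.decomp y
  obtain ⟨c, hc, hc0⟩ := S.decomp z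
  have haz : a ≠ S.e a := part_zl hx ha ha0
  have hbz : b ≠ S.e b := part_zl hy hb hb0
  have hcz : c ≠ S.e c := part_zl hz hc hc0
  set α := S.e (S.u x) with hα
  set β := S.e (S.u y) with hβ
  set γ := S.e (S.u z) with hγ
  have hea : S.e x = S.mul α a := e_eq_rho_part hx ha ha0
  have heb : S.e y = S.mul β b := e_eq_rho_part hy hb hb0
  have hec : S.e z = S.mul γ c := e_eq_rho_part hz hc hc0
  refine ⟨S.mul a b, S.mul a c,
    part_mul_e ha0 hb0, part_mul_zl haz ha0 hbz hb0,
    part_mul_e ha0 hc0, part_mul_zl haz ha0 hcz hc0, ?_, ?_, ?_, ?_⟩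
  · -- e x ⊠ y = α ⊠ (a⊠b)
    rw [mag_mul_eq_part (mag_e x) hy hb hb0]
    rw [hea, ← S.mul_assoc]
  · rw [mag_mul_eq_part (mag_e x) hz hc hc0]
    rw [hea, ← S.mul_assoc]
  · -- e(y+z) ⊠ x = β(ab) ⊞ γ(ac)
    have h1 : S.mul (S.e (S.add y z)) x
        = S.add (S.mul (S.e y) x) (S.mul (S.e z) x) := by
      rw [e_add_eq, S.mul_comm _ x, mul_mag_add (mag_e y) (mag_e z) x,
        S.mul_comm x (S.e y), S.mul_comm x (S.e z)]
    rw [h1, mag_mul_eq_part (mag_e y) hx ha ha0,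
      mag_mul_eq_part (mag_e z) hx ha ha0, heb, hec]
    -- (β⊠b)⊠a = β⊠(a⊠b)
    rw [← S.mul_assoc β b a, S.mul_comm b a, ← S.mul_assoc γ c a, S.mul_comm c a]
  · -- e x ⊠ (y+z)
    have hyz : S.add y z = S.add (S.add b c) (S.e (S.add y z)) := by
      rw [e_add_eq]
      calc S.add y z = S.add (S.add b (S.e y)) (S.add c (S.e z)) := by
            rw [← hb, ← hc]
        _ = S.add b (S.add (S.e y) (S.add c (S.e z))) := (S.add_assoc _ _ _).symm
        _ = S.add b (S.add c (S.add (S.e y) (S.e z))) := by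
            rw [add_left_comm' (S.e y) c (S.e z)]
        _ = S.add (S.add b c) (S.add (S.e y) (S.e z)) := S.add_assoc _ _ _
    have hbc0 : S.e (S.add b c) = S.zero := by
      rw [e_add_eq, hb0, hc0, S.add_zero]
    rw [mag_mul_decomp (mag_e x) hyz hbc0]
    have h2 : S.mul (S.e x) (S.e (S.add y z))
        = S.add (S.mul (S.e x) (S.e y)) (S.mul (S.e x) (S.e z)) := by
      rw [e_add_eq]
      exact mul_mag_add (mag_e y) (mag_e z) (S.e x)
    rw [h2]
    have h3 : S.mul (S.e x) (S.add b c) = S.mul α (S.add (S.mul a b) (S.mul a c)) := by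
      rw [hea, ← S.mul_assoc, part_dist ha0 hb0 hc0]
    have h4 : S.mul (S.e x) (S.e y) = S.mul (S.mul α β) (S.mul a b) := by
      rw [hea, heb]; exact mul4 α a β b
    have h5 : S.mul (S.e x) (S.e z) = S.mul (S.mul α γ) (S.mul a c) := by
      rw [hea, hec]; exact mul4 α a γ c
    rw [h3, h4, h5, S.add_assoc]

end Reduction

end SolidAux
namespace SolidAux

variable {A : Type*} {S : Solid A}

section Main

lemma D_iff (x y z : A) :
    (S.add (S.mul x y) (S.mul x z) = S.mul x (S.add y z)) ↔
    ((S.mul (S.e x) (S.add y z) = S.add (S.mul (S.e x) y) (S.mul (S.e x) z)) ∨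
      S.le (S.add (S.mul (S.e x) y) (S.mul (S.e x) z))
        (S.mul (S.e (S.add y z)) x)) := by
  have hKmag : IsMag S (S.add (S.mul (S.e x) y) (S.mul (S.e x) z)) :=
    mag_add (mag_mul_left (mag_e x) y) (mag_mul_left (mag_e x) z)
  have hd2 : S.add (S.mul x y) (S.mul x z)
      = S.add (S.mul x (S.add y z)) (S.add (S.mul (S.e x) y) (S.mul (S.e x) z)) := by
    rw [S.dist x y z]; exact (S.add_assoc _ _ _).symm
  have heX := S.e_mul x (S.add y z)
  have hA : IsMag S (S.mul (S.e x) (S.add y z)) := mag_mul_left (mag_e x) _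
  have hB : IsMag S (S.mul (S.e (S.add y z)) x) := mag_mul_left (mag_e (S.add y z)) x
  have hAK : S.le (S.mul (S.e x) (S.add y z))
      (S.add (S.mul (S.e x) y) (S.mul (S.e x) z)) := mag_subdist (mag_e x) y z
  constructor
  · intro hD
    rw [hd2] at hD
    have hKle := absorb_le hD
    rw [heX] at hKle
    rcases mag_add_eq_or hA hB with h | h
    · rw [h] at hKle
      exact Or.inl (S.le_antisymm _ _ hAK hKle)
    · rw [h] at hKle
      exact Or.inr hKle
  · intro h
    have hKeX : S.le (S.add (S.mul (S.e x) y) (S.mul (S.e x) z))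
        (S.e (S.mul x (S.add y z))) := by
      rw [heX]
      rcases h with hI | hII
      · rw [← hI]; exact le_add_left hA hB
      · exact S.le_trans _ _ _ hII (le_add_right hA hB)
    have h2 := le_absorb hKmag hKeX
    rw [hd2]
    exact h2

lemma I_of_xmag {x y z : A} (hx : x = S.e x)
    (hII : S.le (S.add (S.mul (S.e x) y) (S.mul (S.e x) z))
      (S.mul (S.e (S.add y z)) x)) :
    S.mul (S.e x) (S.add y z) = S.add (S.mul (S.e x) y) (S.mul (S.e x) z) := by
  have hAK : S.le (S.mul (S.e x) (S.add y z))
      (S.add (S.mul (S.e x) y) (S.mul (S.e x) z)) := mag_subdist (mag_e x) y z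
  have h1 : S.le (S.mul (S.e (S.add y z)) x) (S.mul (S.e x) (S.add y z)) := by
    conv_lhs => rw [hx]
    have h2 := e_mul_le (S := S) (mag_e (S := S) x) (S.add y z)
    rwa [S.mul_comm (S.add y z) (S.e x)] at h2
  exact S.le_antisymm _ _ hAK (S.le_trans _ _ _ hII h1)

lemma I_of_mag_left {x y z : A} (hy : y = S.e y) :
    S.mul (S.e x) (S.add y z) = S.add (S.mul (S.e x) y) (S.mul (S.e x) z) := by
  obtain ⟨c, hc, hc0⟩ := S.decomp z
  have hymag : IsMag S y := hy.symm
  have he : S.e (S.add y z) = S.add y (S.e z) := by rw [e_add_eq, ← hy]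
  have hw : S.add y z = S.add c (S.e (S.add y z)) := by
    rw [he]
    conv_lhs => rw [hc]
    exact add_left_comm' y c (S.e z)
  rw [mag_mul_decomp (mag_e x) hw hc0, he,
    mul_mag_add hymag (mag_e z) (S.e x),
    mag_mul_decomp (mag_e x) hc hc0]
  exact add_left_comm' _ _ _

lemma I_of_mag_right {x y z : A} (hz : z = S.e z) :
    S.mul (S.e x) (S.add y z) = S.add (S.mul (S.e x) y) (S.mul (S.e x) z) := by
  have h := I_of_mag_left (x := x) (z := y) hz
  rw [S.add_comm z y] at h
  exact h.trans (S.add_comm _ _)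

/-- pure magnitude core for direction III → I ∨ II (case α ≤ β) -/
lemma core1_mag {α β γ P Q : A} (hα : IsMag S α) (hβ : IsMag S β) (hγ : IsMag S γ)
    (hP0 : S.e P = S.zero) (hβ1 : S.le β S.one) (hγ1 : S.le γ S.one)
    (hαβ : S.le α β) :
    (S.add (S.add (S.mul α (S.add P Q)) (S.mul (S.mul α β) P)) (S.mul (S.mul α γ) Q)
      = S.add (S.mul α P) (S.mul α Q)) ∨
    S.le (S.add (S.mul α P) (S.mul α Q)) (S.add (S.mul β P) (S.mul γ Q)) := by
  have hαP : IsMag S (S.mul α P) := mag_mul_left hα P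
  have hαQ : IsMag S (S.mul α Q) := mag_mul_left hα Q
  have hβP : IsMag S (S.mul β P) := mag_mul_left hβ P
  have hγQ : IsMag S (S.mul γ Q) := mag_mul_left hγ Q
  have hX : IsMag S (S.mul α (S.add P Q)) := mag_mul_left hα _
  have hY : IsMag S (S.mul (S.mul α β) P) := mag_mul_left (mag_mul_left hα β) P
  have hZ : IsMag S (S.mul (S.mul α γ) Q) := mag_mul_left (mag_mul_left hα γ) Q
  -- αβP ≤ αP
  have hY_le : S.le (S.mul (S.mul α β) P) (S.mul α P) := by
    have e1 : S.mul (S.mul α β) P = S.mul (S.mul α P) β := by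
      rw [← S.mul_assoc, S.mul_comm β P, S.mul_assoc]
    have h1 := amplif_mag hαP (by rw [hβ]; exact S.le_refl β) hβ1
    rw [S.mul_comm (S.mul α P) S.one, S.one_mul] at h1
    rw [e1]
    exact h1
  have hZ_le : S.le (S.mul (S.mul α γ) Q) (S.mul α Q) := by
    have e1 : S.mul (S.mul α γ) Q = S.mul (S.mul α Q) γ := by
      rw [← S.mul_assoc, S.mul_comm γ Q, S.mul_assoc]
    have h1 := amplif_mag hαQ (by rw [hγ]; exact S.le_refl γ) hγ1
    rw [S.mul_comm (S.mul α Q) S.one, S.one_mul] at h1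
    rw [e1]
    exact h1
  -- BIG ≤ αP + αQ
  have big_le : S.le
      (S.add (S.add (S.mul α (S.add P Q)) (S.mul (S.mul α β) P)) (S.mul (S.mul α γ) Q))
      (S.add (S.mul α P) (S.mul α Q)) := by
    apply mag_add_le (mag_add hX hY) hZ
    · apply mag_add_le hX hY
      · exact mag_subdist hα P Q
      · exact S.le_trans _ _ _ hY_le (le_add_left hαP hαQ)
    · exact S.le_trans _ _ _ hZ_le (le_add_right hαP hαQ)
  -- αP ≤ βP
  have hαP_le_βP : S.le (S.mul α P) (S.mul β P) := by
    have := mag_mul_mono hα hβ hαβ P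
    rwa [S.mul_comm P α, S.mul_comm P β] at this
  -- αQ ≤ α(P+Q) + αP
  have hQle : S.le (S.mul α Q) (S.add (S.mul α (S.add P Q)) (S.mul α P)) := by
    have hQrep : Q = S.add (S.add P Q) (S.neg P) := by
      symm
      calc S.add (S.add P Q) (S.neg P) = S.add (S.add Q P) (S.neg P) := by
            rw [S.add_comm P Q]
        _ = S.add Q (S.add P (S.neg P)) := (S.add_assoc _ _ _).symm
        _ = S.add Q (S.e P) := by rw [S.add_neg]
        _ = S.add Q S.zero := by rw [hP0]
        _ = Q := S.add_zero Q
    conv_lhs => rw [hQrep]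
    have h1 := mag_subdist hα (S.add P Q) (S.neg P)
    rwa [neg_mul_mag hα P] at h1
  rcases S.le_total (S.mul α (S.add P Q)) (S.mul β P) with c1 | c2
  · right
    apply mag_add_le hαP hαQ
    · exact S.le_trans _ _ _ hαP_le_βP (le_add_left hβP hγQ)
    · have h2 : S.le (S.add (S.mul α (S.add P Q)) (S.mul α P)) (S.mul β P) :=
        mag_add_le hX hαP c1 hαP_le_βP
      exact S.le_trans _ _ _ hQle (S.le_trans _ _ _ h2 (le_add_left hβP hγQ))
  · left
    apply S.le_antisymm _ _ big_le
    have hαP_le : S.le (S.mul α P) (S.mul α (S.add P Q)) :=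
      S.le_trans _ _ _ hαP_le_βP c2
    have hαQ_le : S.le (S.mul α Q) (S.mul α (S.add P Q)) :=
      S.le_trans _ _ _ hQle (mag_add_le hX hαP (S.le_refl _) hαP_le)
    have hX_le_BIG : S.le (S.mul α (S.add P Q))
        (S.add (S.add (S.mul α (S.add P Q)) (S.mul (S.mul α β) P))
          (S.mul (S.mul α γ) Q)) :=
      S.le_trans _ _ _ (le_add_left hX hY) (le_add_left (mag_add hX hY) hZ)
    exact mag_add_le hαP hαQ (S.le_trans _ _ _ hαP_le hX_le_BIG)
      (S.le_trans _ _ _ hαQ_le hX_le_BIG)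

lemma core1 {x y z : A} (hx : x ≠ S.e x) (hy : y ≠ S.e y) (hz : z ≠ S.e z)
    (hIII : S.le (S.e (S.u x)) (S.add (S.e (S.u y)) (S.e (S.u z)))) :
    (S.mul (S.e x) (S.add y z) = S.add (S.mul (S.e x) y) (S.mul (S.e x) z)) ∨
    S.le (S.add (S.mul (S.e x) y) (S.mul (S.e x) z)) (S.mul (S.e (S.add y z)) x) := by
  obtain ⟨P, Q, hP0, hPzl, hQ0, hQzl, k1, k2, k3, k4⟩ := keyE hx hy hz
  rw [k1, k2, k3, k4]
  rcases mag_add_eq_or (mag_e (S.u y)) (mag_e (S.u z)) with hbg | hbg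
  · rw [hbg] at hIII
    exact core1_mag (mag_e (S.u x)) (mag_e (S.u y)) (mag_e (S.u z)) hP0
      (rho_le_one hy) (rho_le_one hz) hIII
  · rw [hbg] at hIII
    have h := core1_mag (mag_e (S.u x)) (mag_e (S.u z)) (mag_e (S.u y)) hQ0
      (rho_le_one hz) (rho_le_one hy) hIII (P := Q) (Q := P)
    rcases h with h | h
    · left
      rw [S.add_comm Q P, add_right_comm'] at h
      rw [h, S.add_comm]
    · right
      rw [S.add_comm (S.mul (S.e (S.u x)) Q), S.add_comm (S.mul (S.e (S.u z)) Q)] at h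
      exact h

lemma core2 {x y z : A} (hx : x ≠ S.e x) (hy : y ≠ S.e y) (hz : z ≠ S.e z)
    (hII : S.le (S.add (S.mul (S.e x) y) (S.mul (S.e x) z))
      (S.mul (S.e (S.add y z)) x)) :
    S.le (S.e (S.u x)) (S.add (S.e (S.u y)) (S.e (S.u z))) := by
  obtain ⟨P, Q, hP0, hPzl, hQ0, hQzl, k1, k2, k3, _⟩ := keyE hx hy hz
  rw [k1, k2, k3] at hII
  rcases S.le_total (S.e (S.u x)) (S.add (S.e (S.u y)) (S.e (S.u z))) with h | hba
  · exact h
  have hβα : S.le (S.e (S.u y)) (S.e (S.u x)) :=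
    S.le_trans _ _ _ (le_add_left (mag_e (S.u y)) (mag_e (S.u z))) hba
  have hγα : S.le (S.e (S.u z)) (S.e (S.u x)) :=
    S.le_trans _ _ _ (le_add_right (mag_e (S.u y)) (mag_e (S.u z))) hba
  have h1 : S.le (S.mul (S.e (S.u y)) P) (S.mul (S.e (S.u x)) P) := by
    have := mag_mul_mono (mag_e (S.u y)) (mag_e (S.u x)) hβα P
    rwa [S.mul_comm P _, S.mul_comm P _] at this
  have h2 : S.le (S.mul (S.e (S.u z)) Q) (S.mul (S.e (S.u x)) Q) := by
    have := mag_mul_mono (mag_e (S.u z)) (mag_e (S.u x)) hγα Q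
    rwa [S.mul_comm Q _, S.mul_comm Q _] at this
  have hle2 : S.le (S.add (S.mul (S.e (S.u y)) P) (S.mul (S.e (S.u z)) Q))
      (S.add (S.mul (S.e (S.u x)) P) (S.mul (S.e (S.u x)) Q)) := by
    have a1 := S.add_le_add _ _ (S.mul (S.e (S.u z)) Q) h1
    have a2 := add_le_add_left (S.mul (S.e (S.u x)) P) h2
    exact S.le_trans _ _ _ a1 a2
  have hEq : S.add (S.mul (S.e (S.u x)) P) (S.mul (S.e (S.u x)) Q)
      = S.add (S.mul (S.e (S.u y)) P) (S.mul (S.e (S.u z)) Q) :=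
    S.le_antisymm _ _ hII hle2
  rcases mag_add_eq_or (S := S) (mag_mul_left (S := S) (mag_e (S := S) (S.u y)) P)
    (mag_mul_left (S := S) (mag_e (S := S) (S.u z)) Q) with h | h
  · -- βP + γQ = βP hence αP = βP hence α = β
    have hαle : S.le (S.mul (S.e (S.u x)) P) (S.mul (S.e (S.u y)) P) := by
      have := le_add_left (S := S) (mag_mul_left (S := S) (mag_e (S := S) (S.u x)) P)
        (mag_mul_left (S := S) (mag_e (S := S) (S.u x)) Q)
      rw [hEq, h] at this
      exact this
    have heq2 : S.mul (S.e (S.u x)) P = S.mul (S.e (S.u y)) P :=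
      S.le_antisymm _ _ hαle h1
    have := mag_cancel hPzl hP0 heq2
    rw [this]
    exact le_add_left (mag_e (S.u y)) (mag_e (S.u z))
  · have hαle : S.le (S.mul (S.e (S.u x)) Q) (S.mul (S.e (S.u z)) Q) := by
      have := le_add_right (S := S) (mag_mul_left (S := S) (mag_e (S := S) (S.u x)) P)
        (mag_mul_left (S := S) (mag_e (S := S) (S.u x)) Q)
      rw [hEq, h] at this
      exact this
    have heq2 : S.mul (S.e (S.u x)) Q = S.mul (S.e (S.u z)) Q :=
      S.le_antisymm _ _ hαle h2
    have := mag_cancel hQzl hQ0 heq2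
    rw [this]
    exact le_add_right (mag_e (S.u y)) (mag_e (S.u z))

end Main

end SolidAux
theorem stmt19 {A : Type*} (S : Solid A) (x y z : A) :
    S.add (S.mul x y) (S.mul x z) = S.mul x (S.add y z) ↔
    (S.mul (S.e x) (S.add y z) =
        S.add (S.mul (S.e x) y) (S.mul (S.e x) z) ∨
      S.le (S.R x) (S.add (S.R y) (S.R z))) := by
  classical
  constructor
  · intro hD
    rcases (SolidAux.D_iff x y z).mp hD with hI | hII
    · exact Or.inl hI
    · by_cases hx : x = S.e x
      · exact Or.inl (SolidAux.I_of_xmag hx hII)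
      · by_cases hy : y = S.e y
        · exact Or.inl (SolidAux.I_of_mag_left hy)
        · by_cases hz : z = S.e z
          · exact Or.inl (SolidAux.I_of_mag_right hz)
          · right
            have h3 := SolidAux.core2 hx hy hz hII
            simp only [Solid.R, if_neg hx, if_neg hy, if_neg hz]
            exact h3
  · intro h
    apply (SolidAux.D_iff x y z).mpr
    rcases h with hI | hIII
    · exact Or.inl hI
    · by_cases hy : y = S.e y
      · exact Or.inl (SolidAux.I_of_mag_left hy)
      · by_cases hz : z = S.e z
        · exact Or.inl (SolidAux.I_of_mag_right hz)
        · by_cases hx : x = S.e x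
          · exfalso
            apply SolidAux.not_M_le_one (S := S)
            simp only [Solid.R, if_pos hx, if_neg hy, if_neg hz] at hIII
            refine S.le_trans _ _ _ hIII ?_
            exact SolidAux.mag_add_le (SolidAux.mag_e _) (SolidAux.mag_e _)
              (SolidAux.rho_le_one hy) (SolidAux.rho_le_one hz)
          · have hIII' : S.le (S.e (S.u x)) (S.add (S.e (S.u y)) (S.e (S.u z))) := by
              simpa only [Solid.R, if_neg hx, if_neg hy, if_neg hz] using hIII
            exact SolidAux.core1 hx hy hz hIII'
end
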